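/- (Geometric Ashikhmin–Barg condition) Let B be a set of n points in PG(k−1,q), let m (resp. M) be the minimum (resp. maximum) number of points of B contained in a hyperplane. If (n−M)/(n−m) > (q−1)/q, then B is a strong blocking set. -/

import Mathlib

open Projectivization
open scoped LinearAlgebra.Projectivization

/-- A set of points of a projective space is a strong blocking set if its intersection with
every hyperplane (coatom of the submodule lattice) spans that hyperplane. -/
def IsStrongBlocking {F V : Type*} [Field F] [AddCommGroup V] [Module F V]
    (B : Set (ℙ F V)) : Prop :=
  ∀ H : Submodule F V, IsCoatom H →
    (⨆ P ∈ {P ∈ B | Projectivization.submodule P ≤ H}, Projectivization.submodule P) = H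

instance Projectivization.instFiniteOfFinite {K V : Type*} [DivisionRing K] [AddCommGroup V]
    [Module K V] [Finite V] : Finite (ℙ K V) :=
  Quotient.finite _

private lemma ncard_biUnion_le_sum {α ι : Type*} [Finite α] (t : Finset ι) (g : ι → Set α) :
    (⋃ i ∈ t, g i).ncard ≤ ∑ i ∈ t, (g i).ncard := by
  classical
  induction t using Finset.induction_on with
  | empty => simp
  | @insert a s h ih =>
    rw [Finset.set_biUnion_insert, Finset.sum_insert h]
    exact le_trans (Set.ncard_union_le _ _) (by omega)

/-- Geometric Ashikhmin–Barg condition: if `B` is a set of `n` points of `PG(k-1,q)`,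
`m` (resp. `M`) is a lower (resp. upper) bound for the number of points of `B` on any
hyperplane, and `(n - M)/(n - m) > (q - 1)/q`, then `B` is a strong blocking set. -/
theorem geometric_AB_condition {F : Type*} [Field F] [Fintype F] {k : ℕ}
    (B : Set (ℙ F (Fin k → F))) (n m M : ℕ) (hn : B.ncard = n)
    (hm : ∀ H : Submodule F (Fin k → F), IsCoatom H →
      m ≤ {P ∈ B | Projectivization.submodule P ≤ H}.ncard)
    (hM : ∀ H : Submodule F (Fin k → F), IsCoatom H →
      {P ∈ B | Projectivization.submodule P ≤ H}.ncard ≤ M)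
    (h : ((n : ℚ) - M) / ((n : ℚ) - m) > ((Fintype.card F : ℚ) - 1) / (Fintype.card F)) :
    IsStrongBlocking B := by
  classical
  intro H hH
  by_contra hne
  set V := Fin k → F
  set BW : Submodule F V → Set (ℙ F V) :=
    fun W => {P ∈ B | Projectivization.submodule P ≤ W} with hBW
  set S : Submodule F V := ⨆ P ∈ BW H, Projectivization.submodule P with hSdef
  have hSle : S ≤ H := iSup₂_le fun P hP => hP.2
  have hSlt : S < H := lt_of_le_of_ne hSle hne
  obtain ⟨u, huH, huS⟩ := SetLike.exists_of_lt hSlt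
  obtain ⟨f, hfu, hfS⟩ := S.exists_dual_map_eq_bot_of_notMem huS inferInstance
  obtain ⟨w, -, hwH⟩ := SetLike.exists_of_lt hH.1.lt_top
  set T : Submodule F V := LinearMap.ker f ⊓ H with hTdef
  have hTH : T ≤ H := inf_le_right
  have huT : u ∉ T := fun hu => hfu hu.1
  have hST : S ≤ T := by
    refine le_inf (fun x hx => ?_) hSle
    have : f x ∈ S.map f := Submodule.mem_map_of_mem hx
    rw [hfS] at this
    exact LinearMap.mem_ker.2 ((Submodule.mem_bot F).1 this)
  -- `H = T ⊔ span u`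
  have hHTu : T ⊔ (F ∙ u) = H := by
    apply le_antisymm
    · exact sup_le hTH ((Submodule.span_singleton_le_iff_mem u H).2 huH)
    · intro x hx
      have h1 : x - (f x / f u) • u ∈ T := by
        refine Submodule.mem_inf.2 ⟨?_, H.sub_mem hx (H.smul_mem _ huH)⟩
        simp only [LinearMap.mem_ker, map_sub, map_smul, smul_eq_mul]
        field_simp
        ring
      have h2 : x = (x - (f x / f u) • u) + (f x / f u) • u := by abel
      rw [h2]
      exact Submodule.add_mem_sup h1
        (Submodule.smul_mem _ _ (Submodule.mem_span_singleton_self u))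
  -- `T` together with any single extra vector never spans everything
  have key_ne_top : ∀ x : V, T ⊔ (F ∙ x) ≠ ⊤ := by
    intro x htop
    have hw2 : w ∈ T ⊔ (F ∙ x) := htop.symm ▸ Submodule.mem_top
    have hu2 : u ∈ T ⊔ (F ∙ x) := htop.symm ▸ Submodule.mem_top
    obtain ⟨t, ht, z, hz, hweq⟩ := Submodule.mem_sup.1 hw2
    obtain ⟨t', ht', z', hz', hueq⟩ := Submodule.mem_sup.1 hu2
    obtain ⟨b, rfl⟩ := Submodule.mem_span_singleton.1 hz
    obtain ⟨a, rfl⟩ := Submodule.mem_span_singleton.1 hz'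
    by_cases ha : a = 0
    · subst ha
      rw [zero_smul, add_zero] at hueq
      exact huT (hueq ▸ ht')
    · apply hwH
      have hx : a⁻¹ • (u - t') = x := by
        rw [← hueq, add_sub_cancel_left, smul_smul, inv_mul_cancel₀ ha, one_smul]
      rw [← hweq, ← hx]
      exact H.add_mem (hTH ht) (H.smul_mem _ (H.smul_mem _ (H.sub_mem huH (hTH ht'))))
  -- the family of hyperplanes through `T`, other than `H`
  set Hs : Set (Submodule F V) := {H' | IsCoatom H' ∧ T ≤ H' ∧ H' ≠ H} with hHs
  have hu_not : ∀ H' ∈ Hs, u ∉ H' := by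
    rintro H' ⟨hco, hTle, hne'⟩ hu'
    have hle : H ≤ H' := by
      rw [← hHTu]
      exact sup_le hTle ((Submodule.span_singleton_le_iff_mem u H').2 hu')
    rcases hle.lt_or_eq with hlt | heq
    · exact hco.1 (hH.2 _ hlt)
    · exact hne' heq.symm
  have hex : ∀ H' ∈ Hs, ∃ c : F, w - c • u ∈ H' := by
    intro H' hH'
    have hco := hH'.1
    have hlt : H' < H' ⊔ (F ∙ u) :=
      SetLike.lt_iff_le_and_exists.2
        ⟨le_sup_left, u, Submodule.mem_sup_right (Submodule.mem_span_singleton_self u),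
          hu_not H' hH'⟩
    have hsup : H' ⊔ (F ∙ u) = ⊤ := hco.2 _ hlt
    have hw2 : w ∈ H' ⊔ (F ∙ u) := hsup.symm ▸ Submodule.mem_top
    obtain ⟨y, hy, z, hz, hweq⟩ := Submodule.mem_sup.1 hw2
    obtain ⟨c, rfl⟩ := Submodule.mem_span_singleton.1 hz
    exact ⟨c, by rw [← hweq]; simpa using hy⟩
  set cf : Submodule F V → F := fun H' =>
    if hc : ∃ c : F, w - c • u ∈ H' then hc.choose else 0 with hcf
  have hcf_mem : ∀ H' ∈ Hs, w - cf H' • u ∈ H' := by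
    intro H' hH'
    have hc := hex H' hH'
    simp only [hcf, dif_pos hc]
    exact hc.choose_spec
  -- each member of `Hs` is determined by `cf`
  have hdet : ∀ H' ∈ Hs, ∀ c : F, w - c • u ∈ H' → H' = T ⊔ (F ∙ (w - c • u)) := by
    rintro H' hH' c hz
    obtain ⟨hco, hTle, hne'⟩ := hH'
    apply le_antisymm
    · intro x hx
      have hHtop : H ⊔ (F ∙ w) = ⊤ :=
        hH.2 _ (SetLike.lt_iff_le_and_exists.2
          ⟨le_sup_left, w, Submodule.mem_sup_right (Submodule.mem_span_singleton_self w), hwH⟩)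
      have hx2 : x ∈ H ⊔ (F ∙ w) := hHtop.symm ▸ Submodule.mem_top
      obtain ⟨y, hy, z', hz', hxeq⟩ := Submodule.mem_sup.1 hx2
      obtain ⟨b, rfl⟩ := Submodule.mem_span_singleton.1 hz'
      have hy2 : y ∈ T ⊔ (F ∙ u) := hHTu.symm ▸ hy
      obtain ⟨t, ht, z'', hz'', hyeq⟩ := Submodule.mem_sup.1 hy2
      obtain ⟨a, rfl⟩ := Submodule.mem_span_singleton.1 hz''
      have e1 : x - t - b • (w - c • u) = (a + b * c) • u := by
        rw [← hxeq, ← hyeq]; module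
      have e2 : x = (t + b • (w - c • u)) + (a + b * c) • u := by
        rw [← hxeq, ← hyeq]; module
      have hmem : (a + b * c) • u ∈ H' := by
        rw [← e1]
        exact H'.sub_mem (H'.sub_mem hx (hTle ht)) (H'.smul_mem b hz)
      by_cases habc : a + b * c = 0
      · rw [e2, habc, zero_smul, add_zero]
        exact Submodule.add_mem_sup ht
          (Submodule.smul_mem _ b (Submodule.mem_span_singleton_self _))
      · exfalso
        apply hu_not H' ⟨hco, hTle, hne'⟩
        have := H'.smul_mem (a + b * c)⁻¹ hmem
        rwa [smul_smul, inv_mul_cancel₀ habc, one_smul] at this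
    · exact sup_le hTle ((Submodule.span_singleton_le_iff_mem _ H').2 hz)
  have hinj : Set.InjOn cf Hs := by
    intro H1 h1 H2 h2 hceq
    rw [hdet H1 h1 (cf H1) (hcf_mem H1 h1), hdet H2 h2 (cf H2) (hcf_mem H2 h2), hceq]
  have hHs_fin : Hs.Finite :=
    Set.Finite.of_finite_image (Set.toFinite _) hinj
  have hHs_card : Hs.ncard ≤ Fintype.card F := by
    rw [← Set.ncard_image_of_injOn hinj]
    calc (cf '' Hs).ncard ≤ (Set.univ : Set F).ncard :=
          Set.ncard_le_ncard (Set.subset_univ _) Set.finite_univ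
      _ = Fintype.card F := by rw [Set.ncard_univ, Nat.card_eq_fintype_card]
  -- covering of `B \ BW H` by the hyperplanes in `Hs`
  have cover : ∀ P ∈ B, P ∉ BW H → ∃ H' ∈ Hs, P ∈ BW H' := by
    intro P hPB hPH
    have hne_top : T ⊔ Projectivization.submodule P ≠ ⊤ := by
      rw [Projectivization.submodule_eq]; exact key_ne_top _
    rcases eq_top_or_exists_le_coatom (T ⊔ Projectivization.submodule P) with htop | ⟨H', hco, hle⟩
    · exact absurd htop hne_top
    · refine ⟨H', ⟨hco, le_trans le_sup_left hle, ?_⟩, hPB, le_trans le_sup_right hle⟩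
      rintro rfl
      exact hPH ⟨hPB, le_trans le_sup_right hle⟩
  have hBHB : BW H ⊆ B := fun P hP => hP.1
  have hBHT : ∀ H' ∈ Hs, BW H ⊆ BW H' := by
    rintro H' ⟨hco, hTle, hne'⟩ P hP
    have hPS : Projectivization.submodule P ≤ S :=
      le_iSup₂ (f := fun P (_ : P ∈ BW H) => Projectivization.submodule P) P hP
    exact ⟨hP.1, le_trans (le_trans hPS hST) hTle⟩
  set s : ℕ := (BW H).ncard with hs
  have hsn : s ≤ n := by rw [← hn]; exact Set.ncard_le_ncard hBHB (Set.toFinite _)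
  have hsM : s ≤ M := hM H hH
  have hms : m ≤ s := hm H hH
  -- the main counting estimate
  have hsubset : B \ BW H ⊆ ⋃ H' ∈ hHs_fin.toFinset, (BW H' \ BW H) := by
    rintro P ⟨hPB, hPH⟩
    obtain ⟨H', hH', hP'⟩ := cover P hPB hPH
    exact Set.mem_biUnion (hHs_fin.mem_toFinset.2 hH') ⟨hP', hPH⟩
  have hcount : n - s ≤ Fintype.card F * (M - s) := by
    have h1 : (B \ BW H).ncard = n - s := by
      rw [Set.ncard_diff hBHB (Set.toFinite _), hn]
    calc n - s = (B \ BW H).ncard := h1.symm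
      _ ≤ (⋃ H' ∈ hHs_fin.toFinset, (BW H' \ BW H)).ncard :=
          Set.ncard_le_ncard hsubset (Set.toFinite _)
      _ ≤ ∑ H' ∈ hHs_fin.toFinset, (BW H' \ BW H).ncard := ncard_biUnion_le_sum _ _
      _ ≤ ∑ _H' ∈ hHs_fin.toFinset, (M - s) := by
          refine Finset.sum_le_sum fun H' hH' => ?_
          have hH'mem : H' ∈ Hs := hHs_fin.mem_toFinset.1 hH'
          rw [Set.ncard_diff (hBHT H' hH'mem) (Set.toFinite _)]
          exact Nat.sub_le_sub_right (hM H' hH'mem.1) s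
      _ = hHs_fin.toFinset.card * (M - s) := by rw [Finset.sum_const, smul_eq_mul]
      _ ≤ Fintype.card F * (M - s) := by
          apply Nat.mul_le_mul_right
          rw [← Set.ncard_eq_toFinset_card Hs hHs_fin]
          exact hHs_card
  -- final rational arithmetic
  have hQ : (n : ℚ) - s ≤ (Fintype.card F : ℚ) * ((M : ℚ) - s) := by
    have := (Nat.cast_le (α := ℚ)).mpr hcount
    rwa [Nat.cast_sub hsn, Nat.cast_mul, Nat.cast_sub hsM] at this
  have hq1 : (1 : ℚ) < Fintype.card F := by exact_mod_cast Fintype.one_lt_card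
  by_cases hnm : (n : ℚ) - m = 0
  · rw [hnm, div_zero] at h
    have : (0 : ℚ) < ((Fintype.card F : ℚ) - 1) / (Fintype.card F) :=
      div_pos (by linarith) (by linarith)
    linarith
  · have hmsQ : (m : ℚ) ≤ s := by exact_mod_cast hms
    have hsnQ : (s : ℚ) ≤ n := by exact_mod_cast hsn
    have hnm' : 0 < (n : ℚ) - m := lt_of_le_of_ne (by linarith) (Ne.symm hnm)
    rw [gt_iff_lt, div_lt_div_iff₀ (by linarith) hnm'] at h
    have hp : (0 : ℚ) ≤ ((Fintype.card F : ℚ) - 1) * ((s : ℚ) - m) :=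
      mul_nonneg (by linarith) (by linarith)
    linarith only [hp, hQ, h]
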